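/- Assume (H2) and that σ(u) < 0 for every u > u⋆. Then for every φ ∈ ℝ the system (AE) has exactly one solution (u, v) with u > 0 and v > 0; moreover, writing this unique solution as (U(φ), V(φ)), the function U is strictly decreasing on ℝ and the function V is strictly increasing on ℝ. (Theorem 3.1(ii): uniqueness of monotone solutions under (H2) when σ is everywhere negative.) -/
import Mathlib

open Set

lemma aux_mono (D B : ℝ) (hD : 0 < D) (hB : 0 < B) :
    StrictMonoOn (fun v => D * Real.log v + B * v) (Set.Ioi 0) := by
  intro x hx y hy hxy
  have hl := Real.log_lt_log hx hxy
  have h1 : D * Real.log x < D * Real.log y := by nlinarith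
  have h2 : B * x < B * y := by nlinarith
  simpa using add_lt_add h1 h2

lemma aux_surj (D B : ℝ) (hD : 0 < D) (hB : 0 < B) (y : ℝ) :
    ∃ v, 0 < v ∧ D * Real.log v + B * v = y := by
  set f : ℝ → ℝ := fun v => D * Real.log v + B * v with hf
  set v₁ : ℝ := min (Real.exp ((y - B) / D)) (1/2) with hv₁
  set v₂ : ℝ := max 1 (y / B) with hv₂
  have hv₁pos : 0 < v₁ := lt_min (Real.exp_pos _) (by norm_num)
  have hv₁le : v₁ ≤ 1/2 := min_le_right _ _
  have hv₂ge : (1:ℝ) ≤ v₂ := le_max_left _ _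
  have h12 : v₁ ≤ v₂ := by linarith
  have hfv₁ : f v₁ ≤ y := by
    have h1 : Real.log v₁ ≤ (y - B) / D := by
      calc Real.log v₁ ≤ Real.log (Real.exp ((y - B) / D)) :=
            Real.log_le_log hv₁pos (min_le_left _ _)
        _ = (y - B) / D := Real.log_exp _
    have h2 : D * Real.log v₁ ≤ y - B := by
      rw [le_div_iff₀ hD] at h1; linarith [h1]
    have h3 : B * v₁ ≤ B := by nlinarith
    simp only [hf]; linarith
  have hfv₂ : y ≤ f v₂ := by
    have h1 : (0:ℝ) ≤ Real.log v₂ := Real.log_nonneg hv₂ge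
    have h2 : y ≤ B * v₂ := by
      have : y / B ≤ v₂ := le_max_right _ _
      calc y = B * (y / B) := by field_simp
        _ ≤ B * v₂ := by nlinarith
    simp only [hf]; nlinarith
  have hcont : ContinuousOn f (Icc v₁ v₂) := by
    apply ContinuousOn.add
    · exact continuousOn_const.mul (Real.continuousOn_log.mono (fun x hx => by
        simp only [mem_compl_iff, mem_singleton_iff]
        have h01 : v₁ ≤ x := hx.1
        exact ne_of_gt (lt_of_lt_of_le hv₁pos h01)))
    · exact continuousOn_const.mul continuousOn_id
  have := intermediate_value_Icc h12 hcont
  have hy : y ∈ Icc (f v₁) (f v₂) := ⟨hfv₁, hfv₂⟩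
  obtain ⟨v, hv, hveq⟩ := this hy
  exact ⟨v, lt_of_lt_of_le hv₁pos hv.1, hveq⟩

set_option maxHeartbeats 1000000 in
/-- Theorem 3.1(ii): under (H2), if `σ(u) < 0` for all `u > u⋆`, then for every
`φ` the system (AE) has exactly one positive solution `(U(φ), V(φ))`, with `U`
strictly decreasing and `V` strictly increasing. -/
theorem stmt_11 (d₁ d₂ θ₁ θ₂ g₁₁ g₁₂ g₂₁ g₂₂ c₁ c₂ : ℝ)
    (hd₁ : 0 < d₁) (hd₂ : 0 < d₂) (hθ₁ : 0 < θ₁) (hθ₂ : θ₂ < 0)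
    (hg₁₁ : 0 < g₁₁) (hg₁₂ : 0 < g₁₂) (hg₂₁ : 0 < g₂₁) (hg₂₂ : 0 < g₂₂)
    (hH2 : g₁₁ * g₂₂ - g₁₂ * g₂₁ < 0)
    (hσ : ∀ u : ℝ, d₁ * g₂₂ / (g₁₂ * g₂₁ - g₁₁ * g₂₂) < u →
      (1 / θ₁) * (c₁ - d₁ * Real.log u - g₁₁ * u -
        g₁₂ * (d₂ * (d₁ + g₁₁ * u) / (u * (g₁₂ * g₂₁ - g₁₁ * g₂₂) - d₁ * g₂₂))) -
      (1 / θ₂) * (c₂ -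
        d₂ * Real.log (d₂ * (d₁ + g₁₁ * u) / (u * (g₁₂ * g₂₁ - g₁₁ * g₂₂) - d₁ * g₂₂)) -
        g₂₁ * u -
        g₂₂ * (d₂ * (d₁ + g₁₁ * u) / (u * (g₁₂ * g₂₁ - g₁₁ * g₂₂) - d₁ * g₂₂))) < 0) :
    ∃ U V : ℝ → ℝ,
      (∀ φ : ℝ, 0 < U φ ∧ 0 < V φ ∧
        d₁ * Real.log (U φ) + θ₁ * φ + g₁₁ * U φ + g₁₂ * V φ = c₁ ∧
        d₂ * Real.log (V φ) + θ₂ * φ + g₂₁ * U φ + g₂₂ * V φ = c₂ ∧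
        ∀ a b : ℝ, 0 < a → 0 < b →
          d₁ * Real.log a + θ₁ * φ + g₁₁ * a + g₁₂ * b = c₁ →
          d₂ * Real.log b + θ₂ * φ + g₂₁ * a + g₂₂ * b = c₂ →
          a = U φ ∧ b = V φ) ∧
      StrictAnti U ∧ StrictMono V := by
  set k := g₁₂ * g₂₁ - g₁₁ * g₂₂ with hk_def
  have hk : 0 < k := by rw [hk_def]; linarith
  have hθ₁ne : θ₁ ≠ 0 := ne_of_gt hθ₁
  have hθ₂ne : θ₂ ≠ 0 := ne_of_lt hθ₂
  set Dc := θ₁ * d₂ with hDc_def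
  have hDc : 0 < Dc := mul_pos hθ₁ hd₂
  set Bc := θ₁ * g₂₂ - θ₂ * g₁₂ with hBc_def
  have hBc : 0 < Bc := by rw [hBc_def]; nlinarith
  set Ac := θ₂ * g₁₁ - θ₁ * g₂₁ with hAc_def
  have hAc : Ac < 0 := by rw [hAc_def]; nlinarith
  set ψ : ℝ → ℝ := fun v => Dc * Real.log v + Bc * v with hψ_def
  set ρ : ℝ → ℝ := fun u => (θ₁ * c₂ - θ₂ * c₁) + θ₂ * d₁ * Real.log u + Ac * u with hρ_def
  have hψmono : StrictMonoOn ψ (Set.Ioi 0) := aux_mono Dc Bc hDc hBc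
  have hψlt : ∀ v w : ℝ, 0 < v → 0 < w → ψ v < ψ w → v < w := by
    intro v w hv hw h
    exact (hψmono.lt_iff_lt (mem_Ioi.mpr hv) (mem_Ioi.mpr hw)).mp h
  obtain ⟨Winv, hWinv⟩ : ∃ Winv : ℝ → ℝ, ∀ y, 0 < Winv y ∧ ψ (Winv y) = y := by
    choose Winv h1 h2 using fun y => aux_surj Dc Bc hDc hBc y
    exact ⟨Winv, fun y => ⟨h1 y, h2 y⟩⟩
  have hWinvpos : ∀ y, 0 < Winv y := fun y => (hWinv y).1
  have hψWinv : ∀ y, ψ (Winv y) = y := fun y => (hWinv y).2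
  -- continuity of Winv
  have hWinvcont : Continuous Winv := by
    rw [Metric.continuous_iff]
    intro y ε hε
    have hv : 0 < Winv y := hWinvpos y
    set v := Winv y with hv_def
    set ε' : ℝ := min (ε/2) (v/2) with hε'_def
    have hε' : 0 < ε' := lt_min (by linarith) (by linarith)
    have hε'le : ε' ≤ ε/2 := min_le_left _ _
    have hvm : 0 < v - ε' := by
      have : ε' ≤ v/2 := min_le_right _ _
      linarith
    have h1 : ψ (v - ε') < y := by
      have := hψmono (mem_Ioi.mpr hvm) (mem_Ioi.mpr hv) (by linarith)
      rwa [hψWinv y] at this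
    have h2 : y < ψ (v + ε') := by
      have := hψmono (mem_Ioi.mpr hv) (mem_Ioi.mpr (by linarith : (0:ℝ) < v + ε')) (by linarith)
      rwa [hψWinv y] at this
    refine ⟨min (y - ψ (v - ε')) (ψ (v + ε') - y), lt_min (by linarith) (by linarith), ?_⟩
    intro a ha
    rw [Real.dist_eq] at ha ⊢
    have hab := abs_lt.mp ha
    have hd1 := min_le_left (y - ψ (v - ε')) (ψ (v + ε') - y)
    have hd2 := min_le_right (y - ψ (v - ε')) (ψ (v + ε') - y)
    have ha1 : ψ (v - ε') < a := by linarith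
    have ha2 : a < ψ (v + ε') := by linarith
    have hb1 : v - ε' < Winv a := by
      by_contra hc
      push_neg at hc
      have := hψmono.le_iff_le (mem_Ioi.mpr (hWinvpos a)) (mem_Ioi.mpr hvm)
      have h3 : ψ (Winv a) ≤ ψ (v - ε') := this.mpr hc
      rw [hψWinv a] at h3
      linarith
    have hb2 : Winv a < v + ε' := by
      by_contra hc
      push_neg at hc
      have := hψmono.le_iff_le (mem_Ioi.mpr (by linarith : (0:ℝ) < v + ε')) (mem_Ioi.mpr (hWinvpos a))
      have h3 : ψ (v + ε') ≤ ψ (Winv a) := this.mpr hc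
      rw [hψWinv a] at h3
      linarith
    rw [abs_lt]
    constructor <;> linarith
  have hWinvmono : StrictMono Winv := by
    intro a b hab
    apply hψlt _ _ (hWinvpos a) (hWinvpos b)
    rw [hψWinv a, hψWinv b]; exact hab
  -- the curve parametrization
  set W : ℝ → ℝ := fun u => Winv (ρ u) with hW_def
  have hWpos : ∀ u, 0 < W u := fun u => hWinvpos _
  have hWeq : ∀ u, ψ (W u) = ρ u := fun u => hψWinv _
  have hρanti : ∀ u₁ u₂ : ℝ, 0 < u₁ → u₁ < u₂ → ρ u₂ < ρ u₁ := by
    intro u₁ u₂ h1 h2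
    have hl := Real.log_lt_log h1 h2
    have hθd : θ₂ * d₁ < 0 := mul_neg_of_neg_of_pos hθ₂ hd₁
    simp only [hρ_def]
    nlinarith
  have hWanti : StrictAntiOn W (Ioi 0) := by
    intro u₁ h1 u₂ h2 h
    exact hWinvmono (hρanti u₁ u₂ h1 h)
  -- derivatives
  have hψderiv : ∀ v : ℝ, 0 < v → HasDerivAt ψ (Dc * v⁻¹ + Bc) v := by
    intro v hv
    have h1 := (Real.hasDerivAt_log (ne_of_gt hv)).const_mul Dc
    have h2 : HasDerivAt (fun x : ℝ => Bc * x) Bc v := by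
      simpa using (hasDerivAt_id v).const_mul Bc
    exact h1.add h2
  have hρderiv : ∀ u : ℝ, 0 < u → HasDerivAt ρ (θ₂ * d₁ * u⁻¹ + Ac) u := by
    intro u hu
    have h1 := ((Real.hasDerivAt_log (ne_of_gt hu)).const_mul (θ₂ * d₁)).const_add (θ₁ * c₂ - θ₂ * c₁)
    have h2 : HasDerivAt (fun x : ℝ => Ac * x) Ac u := by
      simpa using (hasDerivAt_id u).const_mul Ac
    exact h1.add h2
  have hWinvD : ∀ y : ℝ, HasDerivAt Winv (Dc * (Winv y)⁻¹ + Bc)⁻¹ y := by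
    intro y
    exact HasDerivAt.of_local_left_inverse hWinvcont.continuousAt
      (hψderiv _ (hWinvpos y))
      (ne_of_gt (add_pos (mul_pos hDc (inv_pos.mpr (hWinvpos y))) hBc))
      (Filter.Eventually.of_forall hψWinv)
  have hWD : ∀ u : ℝ, 0 < u →
      HasDerivAt W ((Dc * (W u)⁻¹ + Bc)⁻¹ * (θ₂ * d₁ * u⁻¹ + Ac)) u := by
    intro u hu
    exact (hWinvD (ρ u)).comp u (hρderiv u hu)
  set φf : ℝ → ℝ := fun u => (c₁ - d₁ * Real.log u - g₁₁ * u - g₁₂ * W u) / θ₁ with hφf_def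
  set Fd : ℝ → ℝ := fun u =>
    (-(d₁ * u⁻¹) - g₁₁ - g₁₂ * ((Dc * (W u)⁻¹ + Bc)⁻¹ * (θ₂ * d₁ * u⁻¹ + Ac))) / θ₁ with hFd_def
  have hφD : ∀ u : ℝ, 0 < u → HasDerivAt φf (Fd u) u := by
    intro u hu
    have h1 := ((Real.hasDerivAt_log (ne_of_gt hu)).const_mul d₁).const_sub c₁
    have h2 : HasDerivAt (fun x : ℝ => g₁₁ * x) g₁₁ u := by
      simpa using (hasDerivAt_id u).const_mul g₁₁
    have h3 := (h1.sub h2).sub ((hWD u hu).const_mul g₁₂)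
    exact h3.div_const θ₁
  clear_value k Dc Bc Ac ψ ρ W φf Fd
  -- Jacobian positivity along the curve
  have hkey : ∀ u : ℝ, 0 < u → W u * (u * k - d₁ * g₂₂) < d₂ * (d₁ + g₁₁ * u) := by
    intro u hu
    rcases le_or_gt (u * k - d₁ * g₂₂) 0 with h | h
    · have h1 : W u * (u * k - d₁ * g₂₂) ≤ 0 :=
        mul_nonpos_of_nonneg_of_nonpos (le_of_lt (hWpos u)) h
      nlinarith [mul_pos hd₂ hd₁, mul_pos hd₂ (mul_pos hg₁₁ hu)]
    · have hu' : d₁ * g₂₂ / k < u := by rw [div_lt_iff₀ hk]; linarith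
      have hσu := hσ u hu'
      set Vu := d₂ * (d₁ + g₁₁ * u) / (u * k - d₁ * g₂₂) with hVu_def
      have hVupos : 0 < Vu := by
        rw [hVu_def]
        exact div_pos (by nlinarith [mul_pos hd₂ hd₁, mul_pos hd₂ (mul_pos hg₁₁ hu)]) h
      have h4 : ψ Vu - ρ u = (θ₁ * θ₂) *
          ((1 / θ₁) * (c₁ - d₁ * Real.log u - g₁₁ * u - g₁₂ * Vu) -
           (1 / θ₂) * (c₂ - d₂ * Real.log Vu - g₂₁ * u - g₂₂ * Vu)) := by
        simp only [hψ_def, hρ_def, hDc_def, hBc_def, hAc_def]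
        field_simp
        ring
      have h5 : 0 < ψ Vu - ρ u := by
        rw [h4]
        exact mul_pos_of_neg_of_neg (mul_neg_of_pos_of_neg hθ₁ hθ₂) hσu
      have h6 : W u < Vu := by
        apply hψlt _ _ (hWpos u) hVupos
        rw [hWeq u]; linarith
      have := (lt_div_iff₀ h).mp (by rw [hVu_def] at h6; exact h6)
      linarith
  have hFdneg : ∀ u : ℝ, 0 < u → Fd u < 0 := by
    intro u hu
    have hv := hWpos u
    have hS : 0 < Dc * (W u)⁻¹ + Bc := add_pos (mul_pos hDc (inv_pos.mpr hv)) hBc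
    have hJ : 0 < (d₁ * u⁻¹ + g₁₁) * (Dc * (W u)⁻¹ + Bc) + g₁₂ * (θ₂ * d₁ * u⁻¹ + Ac) := by
      have hkeyu := hkey u hu
      have hident : (d₁ * u⁻¹ + g₁₁) * (Dc * (W u)⁻¹ + Bc) + g₁₂ * (θ₂ * d₁ * u⁻¹ + Ac)
          = θ₁ * ((d₂ * (d₁ + g₁₁ * u) - W u * (u * k - d₁ * g₂₂)) / (u * W u)) := by
        simp only [hDc_def, hBc_def, hAc_def, hk_def]
        field_simp [ne_of_gt hu, ne_of_gt hv]
        ring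
      rw [hident]
      exact mul_pos hθ₁ (div_pos (by linarith) (mul_pos hu hv))
    have hnum : -(d₁ * u⁻¹) - g₁₁ - g₁₂ * ((Dc * (W u)⁻¹ + Bc)⁻¹ * (θ₂ * d₁ * u⁻¹ + Ac)) < 0 := by
      have h5 : -(d₁ * u⁻¹) - g₁₁ - g₁₂ * ((Dc * (W u)⁻¹ + Bc)⁻¹ * (θ₂ * d₁ * u⁻¹ + Ac))
          = -(((d₁ * u⁻¹ + g₁₁) * (Dc * (W u)⁻¹ + Bc) + g₁₂ * (θ₂ * d₁ * u⁻¹ + Ac))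
              / (Dc * (W u)⁻¹ + Bc)) := by
        field_simp [ne_of_gt hu, ne_of_gt hv, ne_of_gt hS]
        ring
      rw [h5]
      exact neg_lt_zero.mpr (div_pos hJ hS)
    have := div_neg_of_neg_of_pos hnum hθ₁
    simp only [hFd_def]
    exact this
  have hφcont : ContinuousOn φf (Ioi 0) := fun x hx =>
    ((hφD x hx).continuousAt).continuousWithinAt
  have hφanti : StrictAntiOn φf (Ioi 0) := by
    apply strictAntiOn_of_deriv_neg (convex_Ioi 0) hφcont
    intro x hx
    rw [interior_Ioi] at hx
    rw [(hφD x hx).deriv]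
    exact hFdneg x hx
  -- the second representation of φf along the curve
  have hφ2 : ∀ u : ℝ, 0 < u →
      θ₂ * φf u = c₂ - d₂ * Real.log (W u) - g₂₁ * u - g₂₂ * W u := by
    intro u hu
    have e := hWeq u
    simp only [hψ_def, hρ_def, hDc_def, hBc_def, hAc_def] at e
    simp only [hφf_def]
    field_simp [hθ₁ne]
    linear_combination e
  -- surjectivity of φf
  have hsurj : ∀ t : ℝ, ∃ u : ℝ, 0 < u ∧ φf u = t := by
    intro t
    set u₂ := max 1 ((c₁ - θ₁ * t) / g₁₁) with hu₂_def
    have hu₂1 : (1:ℝ) ≤ u₂ := le_max_left _ _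
    have hu₂pos : (0:ℝ) < u₂ := by linarith
    have hub : φf u₂ ≤ t := by
      have hl : 0 ≤ Real.log u₂ := Real.log_nonneg hu₂1
      have h2 : c₁ - θ₁ * t ≤ g₁₁ * u₂ := by
        have h := le_max_right 1 ((c₁ - θ₁ * t) / g₁₁)
        rw [div_le_iff₀ hg₁₁] at h
        linarith
      have h3 : c₁ - d₁ * Real.log u₂ - g₁₁ * u₂ - g₁₂ * W u₂ ≤ θ₁ * t := by
        have := hWpos u₂
        nlinarith
      simp only [hφf_def]
      rw [div_le_iff₀ hθ₁]
      linarith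
    set M := max 1 ((c₂ - θ₂ * t) / g₂₂) with hM_def
    have hM1 : (1:ℝ) ≤ M := le_max_left _ _
    set u₁ := min (1/2) (min u₂ (Real.exp ((ψ M - (θ₁ * c₂ - θ₂ * c₁) - Ac) / (θ₂ * d₁)))) with hu₁_def
    have hu₁pos : 0 < u₁ := lt_min (by norm_num) (lt_min hu₂pos (Real.exp_pos _))
    have hu₁le : u₁ ≤ u₂ := le_trans (min_le_right _ _) (min_le_left _ _)
    have hu₁half : u₁ ≤ 1 := le_trans (min_le_left _ _) (by norm_num)
    have hθd : θ₂ * d₁ < 0 := mul_neg_of_neg_of_pos hθ₂ hd₁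
    have hρu₁ : ψ M ≤ ρ u₁ := by
      have hAu : Ac ≤ Ac * u₁ := by nlinarith
      have hlog : Real.log u₁ ≤ (ψ M - (θ₁ * c₂ - θ₂ * c₁) - Ac) / (θ₂ * d₁) := by
        calc Real.log u₁
            ≤ Real.log (Real.exp ((ψ M - (θ₁ * c₂ - θ₂ * c₁) - Ac) / (θ₂ * d₁))) :=
              Real.log_le_log hu₁pos (le_trans (min_le_right _ _) (min_le_right _ _))
          _ = (ψ M - (θ₁ * c₂ - θ₂ * c₁) - Ac) / (θ₂ * d₁) := Real.log_exp _
      have h7 : ψ M - (θ₁ * c₂ - θ₂ * c₁) - Ac ≤ θ₂ * d₁ * Real.log u₁ := by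
        rw [le_div_iff_of_neg hθd] at hlog
        linarith
      simp only [hρ_def]
      linarith
    have hWM : M ≤ W u₁ := by
      by_contra hc
      push_neg at hc
      have hMpos : (0:ℝ) < M := by linarith
      have h8 := hψmono (mem_Ioi.mpr (hWpos u₁)) (mem_Ioi.mpr hMpos) hc
      rw [hWeq u₁] at h8
      linarith
    have hlb : t ≤ φf u₁ := by
      have h6 := hφ2 u₁ hu₁pos
      have hlW : 0 ≤ Real.log (W u₁) := Real.log_nonneg (by linarith)
      have h7 : c₂ - θ₂ * t ≤ g₂₂ * M := by
        have h := le_max_right 1 ((c₂ - θ₂ * t) / g₂₂)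
        rw [div_le_iff₀ hg₂₂] at h
        linarith
      have h8 : θ₂ * φf u₁ ≤ θ₂ * t := by
        rw [h6]
        have h9 : g₂₂ * M ≤ g₂₂ * W u₁ := by nlinarith
        nlinarith [mul_pos hg₂₁ hu₁pos, mul_pos hd₂ (hWpos u₁)]
      by_contra hc
      push_neg at hc
      nlinarith [mul_lt_mul_of_neg_left hc hθ₂]
    have hsub : Icc u₁ u₂ ⊆ Ioi 0 := fun x hx => lt_of_lt_of_le hu₁pos hx.1
    obtain ⟨u, hu, hueq⟩ := intermediate_value_Icc' hu₁le (hφcont.mono hsub) ⟨hub, hlb⟩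
    exact ⟨u, lt_of_lt_of_le hu₁pos hu.1, hueq⟩
  choose Uf hUpos hUeq using hsurj
  -- monotonicity of Uf and W ∘ Uf
  have hUanti : StrictAnti Uf := by
    intro t₁ t₂ h
    rcases lt_trichotomy (Uf t₂) (Uf t₁) with hlt | heq | hgt
    · exact hlt
    · exfalso
      have : t₂ = t₁ := by rw [← hUeq t₂, ← hUeq t₁, heq]
      linarith
    · exfalso
      have h9 := hφanti (mem_Ioi.mpr (hUpos t₁)) (mem_Ioi.mpr (hUpos t₂)) hgt
      rw [hUeq t₁, hUeq t₂] at h9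
      linarith
  have hVmono : StrictMono (fun t => W (Uf t)) := by
    intro t₁ t₂ h
    exact hWanti (mem_Ioi.mpr (hUpos t₂)) (mem_Ioi.mpr (hUpos t₁)) (hUanti h)
  refine ⟨Uf, fun t => W (Uf t), ?_, hUanti, hVmono⟩
  intro φ₀
  have hU := hUpos φ₀
  have hUe := hUeq φ₀
  have hVp := hWpos (Uf φ₀)
  have heq1 : d₁ * Real.log (Uf φ₀) + θ₁ * φ₀ + g₁₁ * Uf φ₀ + g₁₂ * W (Uf φ₀) = c₁ := by
    have h10 := hUe
    simp only [hφf_def] at h10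
    field_simp [hθ₁ne] at h10
    linarith
  have heq2 : d₂ * Real.log (W (Uf φ₀)) + θ₂ * φ₀ + g₂₁ * Uf φ₀ + g₂₂ * W (Uf φ₀) = c₂ := by
    have h6 := hφ2 (Uf φ₀) hU
    rw [hUe] at h6
    linarith
  refine ⟨hU, hVp, heq1, heq2, ?_⟩
  intro a b ha hb e1 e2
  have hba : b = W a := by
    have hψb : ψ b = ρ a := by
      simp only [hψ_def, hρ_def, hDc_def, hBc_def, hAc_def]
      linear_combination θ₁ * e2 - θ₂ * e1
    have h11 : ψ b = ψ (W a) := by rw [hψb, hWeq a]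
    exact hψmono.injOn (mem_Ioi.mpr hb) (mem_Ioi.mpr (hWpos a)) h11
  have hφa : φf a = φ₀ := by
    simp only [hφf_def]
    rw [← hba]
    field_simp [hθ₁ne]
    linarith
  have haU : a = Uf φ₀ :=
    hφanti.injOn (mem_Ioi.mpr ha) (mem_Ioi.mpr hU) (by rw [hφa, hUe])
  exact ⟨haU, by rw [hba, haU]⟩
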